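/- arXiv:1607.05947 — 2 statements merged into one kernel-verified Lean document; each statement's English description precedes it below -/
import Mathlib

section
/- Color homography theorem: Suppose ρ' = α • (ρ * M) for some scalar α > 0 and invertible 3×3 matrix M (shading and linear color change). Let c = ρ * C and c' = ρ' * C with C = !![1,0,1; 0,1,1; 0,0,1], and let H = C⁻¹ * M * C. If the third components c 2 and c' 2 are nonzero, then the chromaticity (c' 0 / c' 2, c' 1 / c' 2) equals the projective image of (c 0 / c 2, c 1 / c 2) under H; that is, writing v = (c 0 / c 2, c 1 / c 2, 1) as a row vector and w = v * H, one has w 2 ≠ 0 and (w 0 / w 2, w 1 / w 2) = (c' 0 / c' 2, c' 1 / c' 2). -/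
theorem color_homography (ρ ρ' : Fin 3 → ℝ) (α : ℝ) (hα : 0 < α)
    (M : Matrix (Fin 3) (Fin 3) ℝ) (hM : IsUnit M)
    (hρ' : ρ' = α • Matrix.vecMul ρ M)
    (C : Matrix (Fin 3) (Fin 3) ℝ) (hC : C = !![1, 0, 1; 0, 1, 1; 0, 0, 1])
    (c c' : Fin 3 → ℝ) (hc : c = Matrix.vecMul ρ C) (hc' : c' = Matrix.vecMul ρ' C)
    (H : Matrix (Fin 3) (Fin 3) ℝ) (hH : H = C⁻¹ * M * C)
    (hc2 : c 2 ≠ 0) (hc'2 : c' 2 ≠ 0) :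
    let v : Fin 3 → ℝ := ![c 0 / c 2, c 1 / c 2, 1]
    let w := Matrix.vecMul v H
    w 2 ≠ 0 ∧ (w 0 / w 2, w 1 / w 2) = (c' 0 / c' 2, c' 1 / c' 2) := by
  intro v w
  have hdet : IsUnit C.det := by
    rw [hC]
    simp [Matrix.det_fin_three, Matrix.vecHead, Matrix.vecTail]
  have hCinv : C * C⁻¹ = 1 := Matrix.mul_nonsing_inv C hdet
  have hv : v = (c 2)⁻¹ • c := by
    funext i
    fin_cases i <;>
      simp [v, div_eq_inv_mul, inv_mul_cancel₀ hc2]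
  have hc'eq : c' = α • Matrix.vecMul ρ (M * C) := by
    rw [hc', hρ', Matrix.smul_vecMul, Matrix.vecMul_vecMul]
  have hw : w = ((c 2)⁻¹ * α⁻¹) • c' := by
    show Matrix.vecMul v H = _
    rw [hv, Matrix.smul_vecMul, hH, hc, Matrix.vecMul_vecMul]
    have : C * (C⁻¹ * M * C) = M * C := by
      rw [← Matrix.mul_assoc, ← Matrix.mul_assoc, hCinv, Matrix.one_mul]
    rw [this, hc'eq, smul_smul]
    congr 1
    rw [← hc]
    field_simp
  have hα' : α ≠ 0 := ne_of_gt hα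
  constructor
  · rw [hw]
    simp only [Pi.smul_apply, smul_eq_mul]
    exact mul_ne_zero (mul_ne_zero (inv_ne_zero hc2) (inv_ne_zero hα')) hc'2
  · rw [hw]
    simp only [Pi.smul_apply, smul_eq_mul, Prod.mk.injEq]
    constructor <;> · rw [mul_div_mul_left]; exact mul_ne_zero (inv_ne_zero hc2) (inv_ne_zero hα')
end

section
/- Identifiability up to scale in the shading model: if D₁ A H₁ = D₂ A H₂ where D₁, D₂ are n×n diagonal matrices with nonzero diagonal entries, H₁, H₂ are invertible 3×3 matrices, A is an n×3 matrix with n ≥ 4 containing four rows every three of which are linearly independent, then there exists a nonzero scalar μ with H₁ = μ • H₂. -/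
open Matrix

lemma aux_coeff_ne_zero (v0 v1 v2 v3 : Fin 3 → ℝ) (c0 c1 c2 : ℝ)
    (h : c0 • v0 + c1 • v1 + c2 • v2 = v3)
    (hli : LinearIndependent ℝ ![v1, v2, v3]) : c0 ≠ 0 := by
  intro h0
  have hz : ∑ i, (![c1, c2, -1] : Fin 3 → ℝ) i • (![v1, v2, v3] : Fin 3 → (Fin 3 → ℝ)) i = 0 := by
    rw [Fin.sum_univ_three]
    simp only [Matrix.cons_val_zero, Matrix.cons_val_one, Matrix.head_cons,
      Matrix.cons_val_two, Matrix.tail_cons]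
    rw [← h, h0]
    simp
    abel
  have := (Fintype.linearIndependent_iff.mp hli) _ hz 2
  norm_num [show (![c1, c2, -1] : Fin 3 → ℝ) 2 = -1 from rfl] at this

theorem identifiability_up_to_scale {n : ℕ} (hn : 4 ≤ n)
    (A : Matrix (Fin n) (Fin 3) ℝ)
    (d₁ d₂ : Fin n → ℝ) (hd₁ : ∀ i, d₁ i ≠ 0) (hd₂ : ∀ i, d₂ i ≠ 0)
    (H₁ H₂ : Matrix (Fin 3) (Fin 3) ℝ) (hH₁ : IsUnit H₁) (hH₂ : IsUnit H₂)
    (f : Fin 4 → Fin n) (hf : Function.Injective f)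
    (hgen : ∀ i j k : Fin 4, i ≠ j → i ≠ k → j ≠ k →
      LinearIndependent ℝ ![A (f i), A (f j), A (f k)])
    (heq : Matrix.diagonal d₁ * A * H₁ = Matrix.diagonal d₂ * A * H₂) :
    ∃ μ : ℝ, μ ≠ 0 ∧ H₁ = μ • H₂ := by
  have hdet2 : IsUnit H₂.det := (Matrix.isUnit_iff_isUnit_det H₂).mp hH₂
  set G : Matrix (Fin 3) (Fin 3) ℝ := H₁ * H₂⁻¹ with hGdef
  -- each row of A is a "left eigenvector" of G
  have hrow : ∀ i : Fin n, d₁ i • (A i ᵥ* H₁) = d₂ i • (A i ᵥ* H₂) := by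
    intro i
    funext j
    have h := congrFun (congrFun heq i) j
    rw [Matrix.mul_assoc, Matrix.mul_assoc] at h
    simp only [Matrix.diagonal_mul] at h
    simpa [Matrix.mul_apply, Matrix.vecMul, dotProduct] using h
  have key : ∀ i : Fin n, (A i) ᵥ* G = (d₂ i / d₁ i) • (A i) := by
    intro i
    have h1 : A i ᵥ* H₁ = (d₂ i / d₁ i) • (A i ᵥ* H₂) := by
      have h := congrArg (fun y => (d₁ i)⁻¹ • y) (hrow i)
      simpa [smul_smul, inv_mul_cancel₀ (hd₁ i), div_eq_inv_mul] using h
    calc (A i) ᵥ* G = (A i ᵥ* H₁) ᵥ* H₂⁻¹ := by rw [vecMul_vecMul]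
      _ = (d₂ i / d₁ i) • ((A i ᵥ* H₂) ᵥ* H₂⁻¹) := by rw [h1, smul_vecMul]
      _ = (d₂ i / d₁ i) • (A i ᵥ* (H₂ * H₂⁻¹)) := by rw [vecMul_vecMul]
      _ = (d₂ i / d₁ i) • (A i) := by rw [Matrix.mul_nonsing_inv _ hdet2, vecMul_one]
  set v : Fin 4 → (Fin 3 → ℝ) := fun i => A (f i) with hvdef
  set lam : Fin 4 → ℝ := fun i => d₂ (f i) / d₁ (f i) with hlamdef
  have hlamne : ∀ i, lam i ≠ 0 := fun i => div_ne_zero (hd₂ _) (hd₁ _)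
  have hv : ∀ i : Fin 4, v i ᵥ* G = lam i • v i := fun i => key (f i)
  set w : Fin 3 → (Fin 3 → ℝ) := ![v 0, v 1, v 2] with hwdef
  have hli : LinearIndependent ℝ w := hgen 0 1 2 (by decide) (by decide) (by decide)
  have hcard : Fintype.card (Fin 3) = Module.finrank ℝ (Fin 3 → ℝ) := by simp
  set B := basisOfLinearIndependentOfCardEqFinrank hli hcard with hBdef
  have hB : ⇑B = w := coe_basisOfLinearIndependentOfCardEqFinrank hli hcard
  set c : Fin 3 → ℝ := fun k => B.repr (v 3) k with hcdef
  have hsum : ∑ k, c k • w k = v 3 := by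
    conv_rhs => rw [← B.sum_repr (v 3)]
    simp [hB, hcdef]
  have hs : c 0 • v 0 + c 1 • v 1 + c 2 • v 2 = v 3 := by
    rw [← hsum, Fin.sum_univ_three]
    simp [hwdef]
  -- each coefficient is nonzero
  have hc0 : c 0 ≠ 0 :=
    aux_coeff_ne_zero (v 0) (v 1) (v 2) (v 3) _ _ _ hs
      (hgen 1 2 3 (by decide) (by decide) (by decide))
  have hc1 : c 1 ≠ 0 := by
    refine aux_coeff_ne_zero (v 1) (v 0) (v 2) (v 3) (c 1) (c 0) (c 2) ?_
      (hgen 0 2 3 (by decide) (by decide) (by decide))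
    rw [← hs]; abel
  have hc2 : c 2 ≠ 0 := by
    refine aux_coeff_ne_zero (v 2) (v 0) (v 1) (v 3) (c 2) (c 0) (c 1) ?_
      (hgen 0 1 3 (by decide) (by decide) (by decide))
    rw [← hs]; abel
  have hcne : ∀ k : Fin 3, c k ≠ 0 := by
    intro k; fin_cases k <;> assumption
  set lamw : Fin 3 → ℝ := ![lam 0, lam 1, lam 2] with hlamwdef
  have hw : ∀ k : Fin 3, w k ᵥ* G = lamw k • w k := by
    intro k
    fin_cases k <;> simpa [hwdef, hlamwdef] using hv _
  -- all eigenvalues equal lam 3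
  have hlameq : ∀ k : Fin 3, lamw k = lam 3 := by
    have h1 : ∑ k, (c k * lamw k) • w k = lam 3 • v 3 := by
      have e1 : G.vecMulLinear (∑ k, c k • w k) = lam 3 • v 3 := by
        rw [hsum]; simpa using hv 3
      rw [map_sum] at e1
      simp only [_root_.map_smul, Matrix.vecMulLinear_apply] at e1
      rw [← e1]
      refine Finset.sum_congr rfl fun k _ => ?_
      rw [hw k, smul_smul]
    have h2 : ∑ k, (lam 3 * c k) • w k = lam 3 • v 3 := by
      rw [← hsum, Finset.smul_sum]
      refine Finset.sum_congr rfl fun k _ => ?_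
      rw [smul_smul]
    have h3 : ∑ k, (c k * lamw k - lam 3 * c k) • w k = 0 := by
      simp only [sub_smul, Finset.sum_sub_distrib, h1, h2, sub_self]
    intro k
    have h4 := (Fintype.linearIndependent_iff.mp hli) _ h3 k
    have h5 : c k * (lamw k - lam 3) = 0 := by linear_combination h4
    rcases mul_eq_zero.mp h5 with h | h
    · exact absurd h (hcne k)
    · linarith
  -- G acts as lam 3 • id
  have hGact : ∀ x : Fin 3 → ℝ, x ᵥ* G = lam 3 • x := by
    have hmap : G.vecMulLinear = lam 3 • LinearMap.id := by
      apply B.ext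
      intro k
      simp only [Matrix.vecMulLinear_apply, LinearMap.smul_apply, LinearMap.id_apply]
      rw [show B k = w k from congrFun hB k, hw k, hlameq k]
    intro x
    have := LinearMap.congr_fun hmap x
    simpa using this
  refine ⟨lam 3, hlamne 3, ?_⟩
  have hH : ∀ x : Fin 3 → ℝ, x ᵥ* H₁ = lam 3 • (x ᵥ* H₂) := by
    intro x
    have hGH : G * H₂ = H₁ := Matrix.nonsing_inv_mul_cancel_right _ _ hdet2
    calc x ᵥ* H₁ = x ᵥ* (G * H₂) := by rw [hGH]
      _ = (x ᵥ* G) ᵥ* H₂ := (vecMul_vecMul _ _ _).symm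
      _ = (lam 3 • x) ᵥ* H₂ := by rw [hGact]
      _ = lam 3 • (x ᵥ* H₂) := smul_vecMul _ _ _
  ext i j
  have := congrFun (hH (Pi.single i 1)) j
  simpa [Matrix.single_one_vecMul] using this
end
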